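/- Let A and B be nonempty closed subsets of ℝⁿ that are intrinsically transversal at x* ∈ A ∩ B with constant κ ∈ (0,1]. Then A and B intersect 0-separably at x* with constant γ = κ²/2: there is a neighborhood U of x* such that ⟨b − a⁺, b⁺ − a⁺⟩ ≤ (1 − κ²/2)‖b − a⁺‖‖b⁺ − a⁺‖ for every building block b → a⁺ → b⁺ with b, a⁺, b⁺ ∈ U, and ⟨a − b, a⁺ − b⟩ ≤ (1 − κ²/2)‖a − b‖‖a⁺ − b‖ for every building block a → b → a⁺ with a, b, a⁺ ∈ U. -/

import Mathlib

open Set Metric Filter Topology RealInnerProductSpace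
open scoped ENNReal

variable {E : Type*} [NormedAddCommGroup E] [InnerProductSpace ℝ E]

/-- The (possibly set-valued) metric projection onto a set `S`. -/
noncomputable def projSet (S : Set E) (x : E) : Set E :=
  {s | s ∈ S ∧ ‖x - s‖ = Metric.infDist x S}

/-- The proximal normal cone to `S` at `s`. -/
def proxNormalCone (S : Set E) (s : E) : Set E :=
  {v | ∃ l : ℝ, 0 ≤ l ∧ ∃ u : E, v = l • u ∧ s ∈ projSet S (s + u)}

/-- `A` and `B` are intrinsically transversal at `x` with constant `κ`. -/
def IntrinsicallyTransversal (A B : Set E) (x : E) (κ : ℝ) : Prop :=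
  ∃ U ∈ nhds x, ∀ a ∈ A ∩ U, a ∉ B → ∀ b ∈ B ∩ U, b ∉ A →
    κ ≤ max (Metric.infDist (‖a - b‖⁻¹ • (a - b)) (proxNormalCone B b))
            (Metric.infDist (‖a - b‖⁻¹ • (a - b)) (-(proxNormalCone A a)))

lemma smul_mem_proxNormalCone {S : Set E} {x s : E} (h : s ∈ projSet S x) {t : ℝ} (ht : 0 ≤ t) :
    t • (x - s) ∈ proxNormalCone S s :=
  ⟨t, ht, x - s, rfl, by simpa using h⟩

lemma eq_of_projSet_of_mem {S : Set E} {x s : E} (h : s ∈ projSet S x) (hx : x ∈ S) : s = x := by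
  have h0 : ‖x - s‖ = 0 := by rw [h.2, Metric.infDist_zero_of_mem hx]
  exact (sub_eq_zero.mp (norm_eq_zero.mp h0)).symm

lemma key_ineq {κ : ℝ} (hκ0 : 0 < κ) (hκ1 : κ ≤ 1) {w p : E} (hw : ‖w‖ = 1)
    (h : ∀ t : ℝ, 0 ≤ t → κ ≤ ‖w - t • p‖) : ⟪w, p⟫ ≤ (1 - κ ^ 2 / 2) * ‖p‖ := by
  have hk2 : κ ^ 2 ≤ 1 := by nlinarith
  rcases le_or_gt ⟪w, p⟫ 0 with hc | hc
  · have h1 : 0 ≤ (1 - κ ^ 2 / 2) * ‖p‖ :=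
      mul_nonneg (by linarith) (norm_nonneg p)
    linarith
  · have hp : p ≠ 0 := by rintro rfl; simp at hc
    have hpn : 0 < ‖p‖ := norm_pos_iff.mpr hp
    set c := ⟪w, p⟫ with hcdef
    set t := c / ‖p‖ ^ 2 with htdef
    have ht0 : 0 ≤ t := by positivity
    have h1 := h t ht0
    have h2 : κ ^ 2 ≤ ‖w - t • p‖ ^ 2 := by nlinarith [norm_nonneg (w - t • p)]
    have h3 : ‖w - t • p‖ ^ 2 = ‖w‖ ^ 2 - 2 * (t * c) + t ^ 2 * ‖p‖ ^ 2 := by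
      rw [norm_sub_sq_real, real_inner_smul_right, norm_smul, Real.norm_eq_abs, mul_pow, sq_abs]
    rw [h3, hw] at h2
    have e1 : t * c = c ^ 2 / ‖p‖ ^ 2 := by rw [htdef]; ring
    have e2 : t ^ 2 * ‖p‖ ^ 2 = c ^ 2 / ‖p‖ ^ 2 := by rw [htdef]; field_simp
    rw [e1, e2] at h2
    have h4 : c ^ 2 ≤ (1 - κ ^ 2) * ‖p‖ ^ 2 := by
      have hp2 : (0:ℝ) < ‖p‖ ^ 2 := by positivity
      have := mul_le_mul_of_nonneg_right h2 hp2.le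
      field_simp at this
      nlinarith [this]
    have hR : 0 < (1 - κ ^ 2 / 2) * ‖p‖ := mul_pos (by linarith) hpn
    nlinarith [h4, hR, sq_nonneg (κ ^ 2 * ‖p‖), mul_pos hpn hpn]

lemma main_ineq {κ : ℝ} (hκ0 : 0 < κ) (hκ1 : κ ≤ 1) {v p : E} (hv : v ≠ 0)
    (h : ∀ t : ℝ, 0 ≤ t → κ ≤ ‖‖v‖⁻¹ • v - t • p‖) :
    ⟪v, p⟫ ≤ (1 - κ ^ 2 / 2) * ‖v‖ * ‖p‖ := by
  have hvn : 0 < ‖v‖ := norm_pos_iff.mpr hv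
  have hw : ‖‖v‖⁻¹ • v‖ = 1 := by
    rw [norm_smul, norm_inv, norm_norm, inv_mul_cancel₀ hvn.ne']
  have hk := key_ineq hκ0 hκ1 hw h
  rw [real_inner_smul_left] at hk
  have h2 := mul_le_mul_of_nonneg_left hk hvn.le
  rw [← mul_assoc, mul_inv_cancel₀ hvn.ne', one_mul] at h2
  nlinarith [h2]

lemma tri_ineq {κ : ℝ} (hκ0 : 0 < κ) (hκ1 : κ ≤ 1) {u v : E}
    (h1 : ‖u‖ ≤ ‖u - v‖) (h2 : ‖v‖ ≤ ‖u‖) :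
    ⟪u, v⟫ ≤ (1 - κ ^ 2 / 2) * ‖u‖ * ‖v‖ := by
  have e : ‖u - v‖ ^ 2 = ‖u‖ ^ 2 - 2 * ⟪u, v⟫ + ‖v‖ ^ 2 := norm_sub_sq_real u v
  have hk2 : κ ^ 2 ≤ 1 := by nlinarith
  have huv : (0:ℝ) ≤ ‖u‖ * ‖v‖ := mul_nonneg (norm_nonneg u) (norm_nonneg v)
  nlinarith [mul_self_le_mul_self (norm_nonneg u) h1,
    mul_le_mul_of_nonneg_right h2 (norm_nonneg v),
    mul_nonneg (by linarith : (0:ℝ) ≤ 1 - κ ^ 2) huv]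

theorem stmt2 {n : ℕ} (A B : Set (EuclideanSpace ℝ (Fin n)))
    (hAne : A.Nonempty) (hBne : B.Nonempty) (hAc : IsClosed A) (hBc : IsClosed B)
    (xs : EuclideanSpace ℝ (Fin n)) (hxs : xs ∈ A ∩ B)
    (κ : ℝ) (hκ : κ ∈ Set.Ioc (0:ℝ) 1)
    (hit : IntrinsicallyTransversal A B xs κ) :
    ∃ U ∈ nhds xs,
      (∀ b a' b' : EuclideanSpace ℝ (Fin n), b ∈ B → a' ∈ projSet A b → b' ∈ projSet B a' →
        b ∈ U → a' ∈ U → b' ∈ U →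
        ⟪b - a', b' - a'⟫ ≤ (1 - κ ^ 2 / 2) * ‖b - a'‖ * ‖b' - a'‖) ∧
      (∀ a b a' : EuclideanSpace ℝ (Fin n), a ∈ A → b ∈ projSet B a → a' ∈ projSet A b →
        a ∈ U → b ∈ U → a' ∈ U →
        ⟪a - b, a' - b⟫ ≤ (1 - κ ^ 2 / 2) * ‖a - b‖ * ‖a' - b‖) := by
  obtain ⟨hκ0, hκ1⟩ := hκ
  obtain ⟨U, hU, hT⟩ := hit
  refine ⟨U, hU, ?_, ?_⟩
  · -- block b → a' → b'
    intro b a' b' hb ha' hb' hbU ha'U hb'U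
    by_cases hA : b' ∈ A
    · -- triangle case
      have h1 : ‖b - a'‖ ≤ ‖(b - a') - (b' - a')‖ := by
        have : ‖b - a'‖ ≤ ‖b - b'‖ := by
          rw [ha'.2, ← dist_eq_norm]
          exact Metric.infDist_le_dist_of_mem hA
        simpa [show (b - a') - (b' - a') = b - b' by abel] using this
      have h2 : ‖b' - a'‖ ≤ ‖b - a'‖ := by
        rw [norm_sub_rev b' a', norm_sub_rev b a']
        rw [hb'.2, ← dist_eq_norm]
        exact Metric.infDist_le_dist_of_mem hb
      exact tri_ineq hκ0 hκ1 h1 h2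
    · by_cases hB : a' ∈ B
      · have : b' = a' := eq_of_projSet_of_mem hb' hB
        simp [this]
      · -- transversality case
        have hne : a' - b' ≠ 0 := by
          intro h0
          exact hB (sub_eq_zero.mp h0 ▸ hb'.1)
        have hvn : 0 < ‖a' - b'‖ := norm_pos_iff.mpr hne
        have hmax := hT a' ⟨ha'.1, ha'U⟩ hB b' ⟨hb'.1, hb'U⟩ hA
        have hmem : ‖a' - b'‖⁻¹ • (a' - b') ∈ proxNormalCone B b' := by
          refine ⟨‖a' - b'‖⁻¹, by positivity, a' - b', rfl, ?_⟩
          simpa using hb'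
        rw [Metric.infDist_zero_of_mem hmem] at hmax
        have hd2 : κ ≤ Metric.infDist (‖a' - b'‖⁻¹ • (a' - b')) (-(proxNormalCone A a')) := by
          rcases le_max_iff.mp hmax with h | h
          · linarith
          · exact h
        have hkey : ∀ t : ℝ, 0 ≤ t → κ ≤ ‖‖a' - b'‖⁻¹ • (a' - b') - t • (a' - b)‖ := by
          intro t ht
          have hzmem : -(t • (b - a')) ∈ -(proxNormalCone A a') :=
            Set.neg_mem_neg.mpr (smul_mem_proxNormalCone ha' ht)
          have := Metric.infDist_le_dist_of_mem (x := ‖a' - b'‖⁻¹ • (a' - b')) hzmem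
          rw [dist_eq_norm] at this
          have he : ‖a' - b'‖⁻¹ • (a' - b') - -(t • (b - a'))
              = ‖a' - b'‖⁻¹ • (a' - b') - t • (a' - b) := by
            rw [show t • (a' - b) = -(t • (b - a')) by rw [← smul_neg, neg_sub]]
          rw [he] at this
          linarith [hd2]
        have hmain := main_ineq hκ0 hκ1 hne hkey
        calc ⟪b - a', b' - a'⟫ = ⟪a' - b', a' - b⟫ := by
              rw [show a' - b' = -(b' - a') by abel, show a' - b = -(b - a') by abel,
                inner_neg_neg, real_inner_comm]
          _ ≤ (1 - κ ^ 2 / 2) * ‖a' - b'‖ * ‖a' - b‖ := hmain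
          _ = (1 - κ ^ 2 / 2) * ‖b - a'‖ * ‖b' - a'‖ := by
              rw [norm_sub_rev a' b, norm_sub_rev a' b']; ring
  · -- block a → b → a'
    intro a b a' ha hb ha' haU hbU ha'U
    by_cases hA : b ∈ A
    · have : a' = b := eq_of_projSet_of_mem ha' hA
      simp [this]
    · by_cases hB : a' ∈ B
      · -- triangle case
        have h1 : ‖a - b‖ ≤ ‖(a - b) - (a' - b)‖ := by
          have : ‖a - b‖ ≤ ‖a - a'‖ := by
            rw [hb.2, ← dist_eq_norm]
            exact Metric.infDist_le_dist_of_mem hB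
          simpa [show (a - b) - (a' - b) = a - a' by abel] using this
        have h2 : ‖a' - b‖ ≤ ‖a - b‖ := by
          rw [norm_sub_rev a' b, norm_sub_rev a b]
          rw [ha'.2, ← dist_eq_norm]
          exact Metric.infDist_le_dist_of_mem ha
        exact tri_ineq hκ0 hκ1 h1 h2
      · -- transversality case
        have hne : a' - b ≠ 0 := by
          intro h0
          exact hA (sub_eq_zero.mp h0 ▸ ha'.1)
        have hvn : 0 < ‖a' - b‖ := norm_pos_iff.mpr hne
        have hmax := hT a' ⟨ha'.1, ha'U⟩ hB b ⟨hb.1, hbU⟩ hA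
        have hmem : ‖a' - b‖⁻¹ • (a' - b) ∈ -(proxNormalCone A a') := by
          rw [Set.mem_neg]
          have : ‖a' - b‖⁻¹ • (b - a') ∈ proxNormalCone A a' := by
            refine ⟨‖a' - b‖⁻¹, by positivity, b - a', rfl, ?_⟩
            simpa using ha'
          simpa [← smul_neg, neg_sub] using this
        rw [Metric.infDist_zero_of_mem hmem] at hmax
        have hd1 : κ ≤ Metric.infDist (‖a' - b‖⁻¹ • (a' - b)) (proxNormalCone B b) := by
          rcases le_max_iff.mp hmax with h | h
          · exact h
          · linarith
        have hkey : ∀ t : ℝ, 0 ≤ t → κ ≤ ‖‖a' - b‖⁻¹ • (a' - b) - t • (a - b)‖ := by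
          intro t ht
          have hzmem : t • (a - b) ∈ proxNormalCone B b := smul_mem_proxNormalCone hb ht
          have := Metric.infDist_le_dist_of_mem (x := ‖a' - b‖⁻¹ • (a' - b)) hzmem
          rw [dist_eq_norm] at this
          linarith [hd1]
        have hmain := main_ineq hκ0 hκ1 hne hkey
        calc ⟪a - b, a' - b⟫ = ⟪a' - b, a - b⟫ := real_inner_comm _ _
          _ ≤ (1 - κ ^ 2 / 2) * ‖a' - b‖ * ‖a - b‖ := hmain
          _ = (1 - κ ^ 2 / 2) * ‖a - b‖ * ‖a' - b‖ := by ring
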